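/- Let K be a field of characteristic ≠ 2 and A ∈ K* a nonzero constant. Suppose (x,y,z) ∈ K[t]³ is a fundamental Markoff triple for A with x ≠ 0. Then K contains i with i² = −1, and there exist a ∈ {1, −1}, a sign ε ∈ {1, −1}, and a non-constant f ∈ K[t] such that x = 2a/A, y = a·f + ε·2ai/A, and z = f. -/

import Mathlib

open Polynomial

/-- If A ∈ K* is a nonzero constant and (x,y,z) is a fundamental Markoff
triple with x ≠ 0, then K contains i with i² = −1 and the triple is of the form
(2a/A, a·f + ε·2ai/A, f) with a, ε ∈ {1,−1} and f non-constant. -/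
theorem markoff_fundamental_triple_A_constant
    {K : Type*} [Field K] (h2 : (2 : K) ≠ 0)
    (A : K) (hA : A ≠ 0)
    (x y z : Polynomial K)
    (heq : x ^ 2 + y ^ 2 + z ^ 2 = C A * x * y * z)
    (hx : x ≠ 0)
    (hxy : x.degree ≤ y.degree) (hyz : y.degree = z.degree)
    (hmax : 0 < max x.degree (max y.degree z.degree)) :
    ∃ i : K, i ^ 2 = -1 ∧
      ∃ a ε : K, (a = 1 ∨ a = -1) ∧ (ε = 1 ∨ ε = -1) ∧
        ∃ f : Polynomial K, 0 < f.natDegree ∧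
          x = C (2 * a / A) ∧ y = C a * f + C (ε * (2 * a * i / A)) ∧ z = f := by
  -- y, z nonzero
  have hy : y ≠ 0 := by
    intro h; rw [h, degree_zero] at hxy
    exact hx (degree_eq_bot.mp (le_bot_iff.mp hxy))
  have hz : z ≠ 0 := by
    intro h; rw [h, degree_zero] at hyz
    exact hy (degree_eq_bot.mp hyz)
  -- degree bookkeeping
  set m := x.natDegree with hm
  set n := z.natDegree with hn
  have hdx : x.degree = (m : WithBot ℕ) := degree_eq_natDegree hx
  have hdz : z.degree = (n : WithBot ℕ) := degree_eq_natDegree hz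
  have hdy : y.degree = (n : WithBot ℕ) := by rw [hyz, hdz]
  -- x has degree 0
  have hm0 : m = 0 := by
    have hR : (C A * x * y * z).degree = ((m + n + n : ℕ) : WithBot ℕ) := by
      rw [degree_mul, degree_mul, degree_mul, degree_C hA, hdx, hdy, hdz]
      push_cast; ring
    have hL : (x ^ 2 + y ^ 2 + z ^ 2).degree ≤ ((n + n : ℕ) : WithBot ℕ) := by
      refine le_trans (degree_add_le _ _) ?_
      refine max_le (le_trans (degree_add_le _ _) (max_le ?_ ?_)) ?_ <;>
        rw [degree_pow, two_smul] <;>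
        first
          | (rw [hdx]; push_cast; exact_mod_cast add_le_add (hdx ▸ hxy.trans hdy.le)
              (hdx ▸ hxy.trans hdy.le))
          | (rw [hdy]; push_cast; rfl)
          | (rw [hdz]; push_cast; rfl)
    rw [heq, hR] at hL
    have := (Nat.cast_le (α := WithBot ℕ)).mp hL
    omega
  -- x is a nonzero constant c
  obtain ⟨c, hc⟩ : ∃ c : K, x = C c := ⟨x.coeff 0, Polynomial.eq_C_of_natDegree_eq_zero hm0⟩
  have hc0 : c ≠ 0 := fun h => hx (by rw [hc, h, map_zero])
  have h4c : (4 : K) * c ^ 2 ≠ 0 := by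
    have : (4:K) = 2 * 2 := by norm_num
    simp [this, h2, hc0]
  have hC2 : (C (2:K) : Polynomial K) = 2 := by
    rw [show (2:K) = ((2:ℕ):K) by norm_num, Polynomial.C_eq_natCast]; norm_num
  -- n positive
  have hnpos : 0 < n := by
    have hx0 : x.degree = (0 : WithBot ℕ) := by rw [hdx, hm0]; rfl
    rw [hx0, hyz, hdz, max_self] at hmax
    have : (0 : WithBot ℕ) < (n : WithBot ℕ) :=
      lt_of_lt_of_le hmax (max_le (by exact_mod_cast Nat.zero_le n) le_rfl)
    exact_mod_cast this
  -- quadratic relation in y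
  have heq2 : C c ^ 2 + y ^ 2 + z ^ 2 = C A * C c * y * z := by rw [hc] at heq; exact heq
  -- the discriminant square root
  set w : Polynomial K := 2 * y - C (A * c) * z with hwdef
  have hw : w ^ 2 = C (A ^ 2 * c ^ 2 - 4) * z ^ 2 - C (4 * c ^ 2) := by
    have e1 : C (A ^ 2 * c ^ 2 - 4) = (C A * C c)^2 - 4 := by
      rw [map_sub, map_mul, map_pow, map_pow,
        show (C (4:K) : Polynomial K) = 4 from by
          rw [show (4:K) = ((4:ℕ):K) by norm_num, Polynomial.C_eq_natCast]; norm_num]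
      ring
    have e2 : (C (4 * c ^ 2) : Polynomial K) = 4 * C c ^ 2 := by
      rw [map_mul, map_pow,
        show (C (4:K) : Polynomial K) = 4 from by
          rw [show (4:K) = ((4:ℕ):K) by norm_num, Polynomial.C_eq_natCast]; norm_num]
    rw [hwdef, e1, e2, map_mul]
    linear_combination (4 : Polynomial K) * heq2
  -- the discriminant is zero
  have hg : A ^ 2 * c ^ 2 - 4 = 0 := by
    by_contra hg
    set g := A ^ 2 * c ^ 2 - 4 with hgdef
    have hdgz : (C g * z ^ 2).degree = ((2 * n : ℕ) : WithBot ℕ) := by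
      rw [degree_mul, degree_C hg, degree_pow, hdz]
      push_cast; rw [two_smul, zero_add]; push_cast; ring
    have hposc : (0 : WithBot ℕ) < ((2 * n : ℕ) : WithBot ℕ) := by
      exact_mod_cast (by omega : 0 < 2 * n)
    have hlt : (C (4 * c ^ 2) : Polynomial K).degree < (C g * z ^ 2).degree := by
      rw [hdgz]; exact lt_of_le_of_lt degree_C_le hposc
    have hdw2 : (w ^ 2).degree = ((2 * n : ℕ) : WithBot ℕ) := by
      rw [hw, degree_sub_eq_left_of_degree_lt hlt, hdgz]
    have hw0 : w ≠ 0 := by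
      intro h
      rw [h, zero_pow two_ne_zero, degree_zero] at hdw2
      exact absurd hdw2.symm (by exact_mod_cast (WithBot.coe_ne_bot (a := 2*n)))
    have hdw : w.degree = ((n : ℕ) : WithBot ℕ) := by
      rw [degree_pow, degree_eq_natDegree hw0, two_smul] at hdw2
      have h' : w.natDegree + w.natDegree = 2 * n := by exact_mod_cast hdw2
      rw [degree_eq_natDegree hw0]; congr 1; omega
    -- leading coefficients
    have hlead : w.leadingCoeff ^ 2 = g * z.leadingCoeff ^ 2 := by
      have h1 : C g * z ^ 2 = w ^ 2 + C (4 * c ^ 2) := by rw [hw]; ring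
      have hlt2 : (C (4 * c ^ 2) : Polynomial K).degree < (w ^ 2).degree := by
        rw [hdw2]; exact lt_of_le_of_lt degree_C_le hposc
      have h3 := congrArg leadingCoeff h1
      rw [leadingCoeff_add_of_degree_lt' hlt2, leadingCoeff_mul, leadingCoeff_pow,
        leadingCoeff_pow, leadingCoeff_C] at h3
      exact h3.symm
    -- the square root of g
    set l : K := w.leadingCoeff / z.leadingCoeff with hl
    have hzl : z.leadingCoeff ≠ 0 := leadingCoeff_ne_zero.mpr hz
    have hll : l ^ 2 = g := by
      rw [hl, div_pow, hlead, mul_div_assoc, div_self (pow_ne_zero _ hzl), mul_one]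
    have hl0 : l ≠ 0 := fun h => hg (by rw [← hll, h, zero_pow two_ne_zero])
    -- factorization forces z constant, contradiction
    have hfac : (w - C l * z) * (w + C l * z) = - C (4 * c ^ 2) := by
      have : (C l)^2 = C g := by rw [← map_pow, hll]
      linear_combination hw - z^2 * this
    have hR0 : (- C (4 * c ^ 2) : Polynomial K) ≠ 0 :=
      neg_ne_zero.mpr (Polynomial.C_ne_zero.mpr h4c)
    have hPQ : (w - C l * z) * (w + C l * z) ≠ 0 := hfac ▸ hR0
    have hP0 : w - C l * z ≠ 0 := left_ne_zero_of_mul hPQ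
    have hQ0 : w + C l * z ≠ 0 := right_ne_zero_of_mul hPQ
    have hdeg0 : (w - C l * z).degree = 0 ∧ (w + C l * z).degree = 0 := by
      have := congrArg degree hfac
      rw [degree_mul, degree_neg, degree_C h4c] at this
      rw [degree_eq_natDegree hP0, degree_eq_natDegree hQ0] at this
      have h' : (w - C l * z).natDegree + (w + C l * z).natDegree = 0 := by exact_mod_cast this
      constructor <;> rw [degree_eq_natDegree (by assumption)] <;>
        exact_mod_cast (by omega : _ = (0:ℕ))
    have hsum : (w + C l * z) - (w - C l * z) = C (2 * l) * z := by
      rw [map_mul, hC2]; ring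
    have h2l : (2:K) * l ≠ 0 := mul_ne_zero h2 hl0
    have hle : ((n : ℕ) : WithBot ℕ) ≤ 0 := by
      have hd := degree_sub_le (w + C l * z) (w - C l * z)
      rw [hsum, degree_mul, degree_C h2l, hdz, zero_add, hdeg0.1, hdeg0.2, max_self] at hd
      exact hd
    exact absurd (by exact_mod_cast hle : n ≤ 0) (by omega)
  -- endgame: w is constant, extract i, a, f
  have hwsq : w ^ 2 = C (-(4 * c ^ 2)) := by rw [hw, hg, map_zero, zero_mul, zero_sub, map_neg]
  have hw0' : w ≠ 0 := by
    intro h; rw [h, zero_pow two_ne_zero] at hwsq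
    exact neg_ne_zero.mpr (Polynomial.C_ne_zero.mpr h4c) (by rw [map_neg] at hwsq; exact hwsq.symm)
  have hndw : w.natDegree = 0 := by
    have := congrArg natDegree hwsq
    rw [natDegree_pow, natDegree_C] at this
    omega
  obtain ⟨w0, hw0⟩ : ∃ w0 : K, w = C w0 := ⟨w.coeff 0, Polynomial.eq_C_of_natDegree_eq_zero hndw⟩
  have hw0sq : w0 ^ 2 = -(4 * c ^ 2) := by
    have : C (w0 ^ 2) = C (-(4 * c ^ 2)) := by rw [map_pow, ← hw0, hwsq]
    exact C_injective this
  set a : K := A * c / 2 with hadef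
  have hac : 2 * a = A * c := by rw [hadef]; field_simp
  have ha2 : a ^ 2 = 1 := by
    rw [hadef]; field_simp; linear_combination hg
  have ha : a = 1 ∨ a = -1 := by
    have : (a - 1) * (a + 1) = 0 := by linear_combination ha2
    rcases mul_eq_zero.mp this with h | h
    · left; linear_combination h
    · right; linear_combination h
  clear_value a
  set i : K := w0 / (2 * c) with hidef
  have hi : i ^ 2 = -1 := by
    rw [hidef, div_pow, hw0sq]
    rw [mul_pow]; field_simp
    ring
  clear_value i
  refine ⟨i, hi, a, 1, ha, Or.inl rfl, z, hnpos, ?_, ?_, rfl⟩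
  · rw [hc]; congr 1
    rw [hac]; field_simp
  · have key : (1:K) * (2 * a * i / A) = w0 / 2 := by
      rw [one_mul, hidef]
      field_simp
      linear_combination w0 * hac
    rw [key]
    have e1 : C (2:K) * C a = C (A * c) := by rw [← map_mul, hac]
    have e2 : C (2:K) * C (w0 / 2) = C w0 := by rw [← map_mul]; congr 1; field_simp
    have hwC : 2 * y - C (A * c) * z = C w0 := by rw [← hwdef, hw0]
    have hmain : C (2:K) * y = C (2:K) * (C a * z + C (w0 / 2)) := by
      rw [mul_add, ← mul_assoc, e1, e2, hC2]
      linear_combination hwC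
    exact mul_left_cancel₀ (Polynomial.C_ne_zero.mpr h2) hmain
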